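/- The polynomial J vanishes identically in ℂ[t₁,t₂,t₃] if and only if λ₁₂λ₂₃ − λ₁₂λ₁₃ − λ₁₃λ₂₃ = −1. -/

import Mathlib

open MvPolynomial

/-- `P lam a b = t_a² − t_b² + λ_{ab}(t_a − t_b)²` in ℂ[t₁,t₂,t₃],
where `lam a b` is the parameter `λ_{ab}`. -/
noncomputable def P (lam : Fin 3 → Fin 3 → ℂ) (a b : Fin 3) : MvPolynomial (Fin 3) ℂ :=
  X a ^ 2 - X b ^ 2 + C (lam a b) * (X a - X b) ^ 2

/-- The bracket `{t_a, F} = Σ_{b ≠ a} (∂F/∂t_b)·P_{ab}`. -/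
noncomputable def bracket (lam : Fin 3 → Fin 3 → ℂ) (a : Fin 3)
    (F : MvPolynomial (Fin 3) ℂ) : MvPolynomial (Fin 3) ℂ :=
  ∑ b ∈ Finset.univ.filter (· ≠ a), (pderiv b F) * P lam a b

/-- The Jacobiator `J = {t₁, P₂₃} + {t₂, P₃₁} + {t₃, P₁₂}`. -/
noncomputable def J (lam : Fin 3 → Fin 3 → ℂ) : MvPolynomial (Fin 3) ℂ :=
  bracket lam 0 (P lam 1 2) + bracket lam 1 (P lam 2 0) + bracket lam 2 (P lam 0 1)

lemma pderiv_P (lam : Fin 3 → Fin 3 → ℂ) (a b i : Fin 3) (hab : a ≠ b) :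
    pderiv i (P lam a b) =
      (if i = a then (2 * X a + C (lam a b) * (2 * (X a - X b))) else 0)
      + (if i = b then (-(2 * X b) - C (lam a b) * (2 * (X a - X b))) else 0) := by
  by_cases hia : i = a <;> by_cases hib : i = b
  · exact absurd (hia ▸ hib) hab
  · subst hia
    simp [P, pow_two, Derivation.leibniz, pderiv_X, hib, smul_eq_mul]
    ring
  · subst hib
    simp [P, pow_two, Derivation.leibniz, pderiv_X, hia, smul_eq_mul]
    ring
  · simp [P, pow_two, Derivation.leibniz, pderiv_X, hia, hib, smul_eq_mul]

lemma J_eq (lam : Fin 3 → Fin 3 → ℂ)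
    (hanti : ∀ a b : Fin 3, lam b a = -lam a b) :
    J lam = C (2 * (lam 0 1 * lam 1 2 - lam 0 1 * lam 0 2 - lam 0 2 * lam 1 2 + 1)) *
      ((X 0 - X 1) * (X 1 - X 2) * (X 0 - X 2)) := by
  have h10 : lam 1 0 = -lam 0 1 := hanti 0 1
  have h20 : lam 2 0 = -lam 0 2 := hanti 0 2
  have h21 : lam 2 1 = -lam 1 2 := hanti 1 2
  have e0 : Finset.univ.filter (· ≠ (0 : Fin 3)) = {1, 2} := by decide
  have e1 : Finset.univ.filter (· ≠ (1 : Fin 3)) = {0, 2} := by decide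
  have e2 : Finset.univ.filter (· ≠ (2 : Fin 3)) = {0, 1} := by decide
  rw [J, bracket, bracket, bracket, e0, e1, e2,
    Finset.sum_pair (by decide : (1 : Fin 3) ≠ 2),
    Finset.sum_pair (by decide : (0 : Fin 3) ≠ 2),
    Finset.sum_pair (by decide : (0 : Fin 3) ≠ 1),
    pderiv_P lam 1 2 1 (by decide), pderiv_P lam 1 2 2 (by decide),
    pderiv_P lam 2 0 0 (by decide), pderiv_P lam 2 0 2 (by decide),
    pderiv_P lam 0 1 0 (by decide), pderiv_P lam 0 1 1 (by decide)]
  simp only [P, h10, h20, h21, map_neg, Fin.reduceEq, if_true, if_false, reduceIte]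
  simp only [map_add, map_sub, map_neg, map_mul, map_ofNat, map_one]
  ring

/-- The Jacobiator vanishes iff λ₁₂λ₂₃ − λ₁₂λ₁₃ − λ₁₃λ₂₃ = −1. -/
theorem jacobiator_eq_zero_iff (lam : Fin 3 → Fin 3 → ℂ)
    (hanti : ∀ a b : Fin 3, lam b a = -lam a b) :
    J lam = 0 ↔
      lam 0 1 * lam 1 2 - lam 0 1 * lam 0 2 - lam 0 2 * lam 1 2 = -1 := by
  rw [J_eq lam hanti, mul_eq_zero]
  constructor
  · rintro (h | h)
    · rw [C_eq_zero] at h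
      linear_combination (h : _) / 2
    · exfalso
      have := congrArg (eval ![2, 1, 0]) h
      simp only [map_mul, map_sub, eval_X, map_zero] at this
      norm_num [Matrix.cons_val_two] at this
  · intro h
    left
    rw [C_eq_zero]
    linear_combination 2 * h
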